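/- Lipschitzness of the Taylorized Jacobian on a Frobenius ball (part of Lemma A.2(a)): Assume σ' is C₁-Lipschitz, σ is k-times continuously differentiable with σ^{(k)} L-Lipschitz, and ‖x_i‖ = 1 for all i. Then for every C₀ > 0 there exists a constant K > 0 depending only on (k, L, C₁, C₀, n) — in particular not on m — such that for all W, W̃ ∈ (ℝ^d)^m with ‖W − W₀‖_F ≤ C₀ and ‖W̃ − W₀‖_F ≤ C₀: ‖J^{(k)}(W) − J^{(k)}(W̃)‖_F ≤ K ‖W − W̃‖_F. -/

import Mathlib

open scoped BigOperators RealInnerProductSpace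
noncomputable section

/-- Weight space: `m` neurons, each in `ℝ^d`, with the Frobenius (ℓ²-of-ℓ²) norm. -/
abbrev Wts (d m : ℕ) : Type := PiLp 2 (fun _ : Fin m => EuclideanSpace ℝ (Fin d))

/-- Two-layer network `f_W(x) = m^{-1/2} ∑_r a_r σ(⟨w_r, x⟩)`. -/
def net (d m : ℕ) (σ : ℝ → ℝ) (a : Fin m → ℝ) (W : Wts d m)
    (x : EuclideanSpace ℝ (Fin d)) : ℝ :=
  (Real.sqrt m)⁻¹ * ∑ r : Fin m, a r * σ ⟪W r, x⟫

/-- The `k`-th order Taylorized model of the network around `W₀`. -/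
def netT (d m k : ℕ) (σ : ℝ → ℝ) (a : Fin m → ℝ) (W₀ : Wts d m) (W : Wts d m)
    (x : EuclideanSpace ℝ (Fin d)) : ℝ :=
  (Real.sqrt m)⁻¹ * ∑ r : Fin m, a r *
    ∑ j ∈ Finset.range (k + 1),
      (iteratedDeriv j σ ⟪W₀ r, x⟫ / (j.factorial : ℝ)) * ⟪W r - W₀ r, x⟫ ^ j

/-- Residual vector `g(W) ∈ ℝⁿ`, `g(W)ᵢ = f_W(xᵢ) - yᵢ`. -/
def resid (d m n : ℕ) (σ : ℝ → ℝ) (a : Fin m → ℝ)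
    (X : Fin n → EuclideanSpace ℝ (Fin d)) (y : EuclideanSpace ℝ (Fin n))
    (W : Wts d m) : EuclideanSpace ℝ (Fin n) :=
  WithLp.toLp 2 (fun i => net d m σ a W (X i) - y i)

/-- Residual vector `g⁽ᵏ⁾(W) ∈ ℝⁿ` of the Taylorized model. -/
def residT (d m n k : ℕ) (σ : ℝ → ℝ) (a : Fin m → ℝ) (W₀ : Wts d m)
    (X : Fin n → EuclideanSpace ℝ (Fin d)) (y : EuclideanSpace ℝ (Fin n))
    (W : Wts d m) : EuclideanSpace ℝ (Fin n) :=
  WithLp.toLp 2 (fun i => netT d m k σ a W₀ W (X i) - y i)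

/-- Squared loss `L(W) = ½‖g(W)‖²`. -/
def loss (d m n : ℕ) (σ : ℝ → ℝ) (a : Fin m → ℝ)
    (X : Fin n → EuclideanSpace ℝ (Fin d)) (y : EuclideanSpace ℝ (Fin n))
    (W : Wts d m) : ℝ :=
  (1 / 2) * ‖resid d m n σ a X y W‖ ^ 2

/-- Squared loss `L⁽ᵏ⁾(W) = ½‖g⁽ᵏ⁾(W)‖²` of the Taylorized model. -/
def lossT (d m n k : ℕ) (σ : ℝ → ℝ) (a : Fin m → ℝ) (W₀ : Wts d m)
    (X : Fin n → EuclideanSpace ℝ (Fin d)) (y : EuclideanSpace ℝ (Fin n))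
    (W : Wts d m) : ℝ :=
  (1 / 2) * ‖residT d m n k σ a W₀ X y W‖ ^ 2

/-- `i`-th row of the Jacobian `J(W)`: the gradient of `W ↦ f_W(xᵢ)`.
Its `r`-th block `Jrow ... W i r` is the gradient `∇_{w_r} f_W(xᵢ)`. -/
def Jrow (d m n : ℕ) (σ : ℝ → ℝ) (a : Fin m → ℝ)
    (X : Fin n → EuclideanSpace ℝ (Fin d)) (W : Wts d m) (i : Fin n) : Wts d m :=
  gradient (fun V => net d m σ a V (X i)) W

/-- `i`-th row of the Taylorized Jacobian `J⁽ᵏ⁾(W)`. -/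
def JrowT (d m n k : ℕ) (σ : ℝ → ℝ) (a : Fin m → ℝ) (W₀ : Wts d m)
    (X : Fin n → EuclideanSpace ℝ (Fin d)) (W : Wts d m) (i : Fin n) : Wts d m :=
  gradient (fun V => netT d m k σ a W₀ V (X i)) W

/-! ### Auxiliary lemmas -/

/-- `|s^q - t^q| ≤ q * C^q * |s - t|` when `|s|, |t| ≤ C` and `1 ≤ C`. -/
lemma aux_pow_sub_pow {s t C : ℝ} (hs : |s| ≤ C) (ht : |t| ≤ C) (hC : 1 ≤ C) (q : ℕ) :
    |s ^ q - t ^ q| ≤ q * C ^ q * |s - t| := by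
  induction q with
  | zero => simp
  | succ q ih =>
    have h1 : s ^ (q+1) - t ^ (q+1) = s ^ q * (s - t) + t * (s ^ q - t ^ q) := by ring
    have hC0 : (0:ℝ) ≤ C := le_trans zero_le_one hC
    have hsq : |s ^ q| ≤ C ^ q := by
      rw [abs_pow]; exact pow_le_pow_left₀ (abs_nonneg s) hs q
    have hCq : C ^ q ≤ C ^ (q+1) := pow_le_pow_right₀ hC (Nat.le_succ q)
    calc |s ^ (q+1) - t ^ (q+1)| = |s ^ q * (s - t) + t * (s ^ q - t ^ q)| := by rw [h1]
      _ ≤ |s ^ q * (s - t)| + |t * (s ^ q - t ^ q)| := abs_add_le _ _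
      _ = |s ^ q| * |s - t| + |t| * |s ^ q - t ^ q| := by rw [abs_mul, abs_mul]
      _ ≤ C ^ q * |s - t| + C * (q * C ^ q * |s - t|) := by
          gcongr
      _ ≤ (q+1 : ℕ) * C ^ (q+1) * |s - t| := by
          push_cast
          have h2 : C * ((q:ℝ) * C ^ q) = (q:ℝ) * C ^ (q+1) := by ring
          nlinarith [abs_nonneg (s - t), pow_nonneg hC0 q, pow_nonneg hC0 (q+1),
            abs_nonneg (s^q - t^q)]

/-- If `g` takes a small value within distance `c` of every point, so does `deriv g`. -/
lemma aux_deriv_small_near {g : ℝ → ℝ} (hg : Differentiable ℝ g) {A c : ℝ}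
    (h : ∀ x, ∃ ξ, x ≤ ξ ∧ ξ ≤ x + c ∧ |g ξ| ≤ A) :
    ∀ x, ∃ η, x ≤ η ∧ η ≤ x + (2*c+1) ∧ |deriv g η| ≤ 2*A := by
  intro x
  obtain ⟨ξ₁, h1, h2, h3⟩ := h x
  obtain ⟨ξ₂, h4, h5, h6⟩ := h (ξ₁ + 1)
  have hlt : ξ₁ < ξ₂ := by linarith
  obtain ⟨η, hη, heq⟩ := exists_deriv_eq_slope g hlt hg.continuous.continuousOn
    (fun y _ => (hg y).differentiableWithinAt)
  refine ⟨η, by have := hη.1; linarith, by have := hη.2; linarith, ?_⟩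
  rw [heq, abs_div]
  have hd1 : (1:ℝ) ≤ |ξ₂ - ξ₁| := by rw [abs_of_pos (by linarith)]; linarith
  have hnum : |g ξ₂ - g ξ₁| ≤ 2*A := by
    calc |g ξ₂ - g ξ₁| ≤ |g ξ₂| + |g ξ₁| := abs_sub _ _
      _ ≤ 2*A := by linarith
  exact le_trans (div_le_self (abs_nonneg _) hd1) hnum

/-- A Lipschitz bound gives a pointwise bound on the derivative. -/
lemma aux_abs_deriv_le {g : ℝ → ℝ} {C : ℝ} (hC : 0 ≤ C)
    (hlip : ∀ s t : ℝ, |g s - g t| ≤ C * |s - t|) (x : ℝ) : |deriv g x| ≤ C := by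
  have hlip' : LipschitzWith (Real.toNNReal C) g := by
    apply LipschitzWith.of_dist_le_mul
    intro s t
    rw [Real.dist_eq, Real.dist_eq, Real.coe_toNNReal _ hC]
    exact hlip s t
  by_cases hd : DifferentiableAt ℝ g x
  · have h1 : ‖fderiv ℝ g x‖ ≤ (Real.toNNReal C : ℝ) := norm_fderiv_le_of_lipschitz ℝ hlip'
    have h2 : deriv g x = fderiv ℝ g x 1 := (fderiv_apply_one_eq_deriv).symm
    rw [h2]
    calc |fderiv ℝ g x 1| ≤ ‖fderiv ℝ g x‖ * ‖(1:ℝ)‖ := (fderiv ℝ g x).le_opNorm 1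
      _ ≤ C := by rw [norm_one, mul_one]; rwa [Real.coe_toNNReal _ hC] at h1
  · rw [deriv_zero_of_not_differentiableAt hd]; simpa using hC

/-- Uniform bound on the intermediate iterated derivatives (baby Landau–Kolmogorov). -/
lemma aux_iteratedDeriv_bound (k : ℕ) (C₁ L : ℝ) (hC₁0 : 0 ≤ C₁) (hL0 : 0 ≤ L)
    (σ : ℝ → ℝ) (hσ : ContDiff ℝ k σ)
    (hC₁ : ∀ s t : ℝ, |deriv σ s - deriv σ t| ≤ C₁ * |s - t|)
    (hL : ∀ s t : ℝ, |iteratedDeriv k σ s - iteratedDeriv k σ t| ≤ L * |s - t|) :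
    ∀ j, 2 ≤ j → j ≤ k → ∀ x, |iteratedDeriv j σ x| ≤ (2^k * (C₁ + L + 1) + 2)^k := by
  set P : ℝ := 2^k * (C₁ + L + 1) + 2 with hPdef
  have h2k : (1:ℝ) ≤ 2^k := one_le_pow₀ (by norm_num)
  have hP2 : (2:ℝ) ≤ P := by nlinarith
  have hP1 : (1:ℝ) ≤ P := by linarith
  have hdiff : ∀ j, j < k → Differentiable ℝ (iteratedDeriv j σ) := fun j hj =>
    hσ.differentiable_iteratedDeriv j (Nat.cast_lt.mpr hj)
  have Q : ∀ j, 2 ≤ j → j ≤ k → ∀ x, ∃ ξ, x ≤ ξ ∧ ξ ≤ x + (2^j - 1) ∧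
      |iteratedDeriv j σ ξ| ≤ 2^j * C₁ := by
    intro j hj2
    induction j, hj2 using Nat.le_induction with
    | base =>
      intro hk2 x
      refine ⟨x, le_refl x, by norm_num, ?_⟩
      have : iteratedDeriv 2 σ = deriv (deriv σ) := by
        rw [iteratedDeriv_succ, iteratedDeriv_one]
      rw [this]
      calc |deriv (deriv σ) x| ≤ C₁ := aux_abs_deriv_le hC₁0 hC₁ x
        _ ≤ 2^2 * C₁ := by nlinarith
    | succ j hj2 ih =>
      intro hjk x
      have hjk' : j ≤ k := by omega
      have hQj := ih hjk'
      obtain ⟨η, hη1, hη2, hη3⟩ := aux_deriv_small_near (hdiff j (by omega)) hQj x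
      refine ⟨η, hη1, by
        have h2s : (2:ℝ)^(j+1) = 2*2^j := by ring
        linarith [hη2], ?_⟩
      rw [iteratedDeriv_succ]
      calc |deriv (iteratedDeriv j σ) η| ≤ 2 * (2^j * C₁) := hη3
        _ = 2^(j+1) * C₁ := by ring
  have T : ∀ i j, j + i = k → 2 ≤ j → ∀ x, |iteratedDeriv j σ x| ≤ P^(i+1) := by
    intro i
    induction i with
    | zero =>
      intro j hjk hj2 x
      have hjk' : j = k := by omega
      subst hjk'
      obtain ⟨ξ, hξ1, hξ2, hξ3⟩ := Q j hj2 (le_refl j) x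
      have h1 : |iteratedDeriv j σ x - iteratedDeriv j σ ξ| ≤ L * |x - ξ| := hL x ξ
      have h2 : |x - ξ| ≤ 2^j := by rw [abs_of_nonpos (by linarith)]; linarith
      have h2j : (2:ℝ)^j ≥ 1 := one_le_pow₀ (by norm_num)
      have hb : |iteratedDeriv j σ x| ≤ 2^j * C₁ + L * 2^j := by
        calc |iteratedDeriv j σ x| ≤ |iteratedDeriv j σ x - iteratedDeriv j σ ξ|
              + |iteratedDeriv j σ ξ| := by
              have := abs_sub_abs_le_abs_sub (iteratedDeriv j σ x) (iteratedDeriv j σ ξ)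
              linarith [abs_nonneg (iteratedDeriv j σ ξ)]
          _ ≤ L * |x - ξ| + 2^j * C₁ := add_le_add h1 hξ3
          _ ≤ L * 2^j + 2^j * C₁ := by nlinarith
          _ = 2^j * C₁ + L * 2^j := by ring
      calc |iteratedDeriv j σ x| ≤ 2^j * C₁ + L * 2^j := hb
        _ ≤ P^(0+1) := by simp only [pow_one, zero_add]; nlinarith
    | succ i ih =>
      intro j hjk hj2 x
      have hIH : ∀ y, |iteratedDeriv (j+1) σ y| ≤ P^(i+1) := ih (j+1) (by omega) (by omega)
      have hlipj : ∀ y z : ℝ, |iteratedDeriv j σ y - iteratedDeriv j σ z|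
          ≤ P^(i+1) * |y - z| := by
        intro y z
        have := Convex.norm_image_sub_le_of_norm_deriv_le
          (f := iteratedDeriv j σ) (C := P^(i+1)) (s := Set.univ)
          (fun w _ => (hdiff j (by omega) w))
          (fun w _ => by rw [← iteratedDeriv_succ]; exact hIH w)
          convex_univ (Set.mem_univ z) (Set.mem_univ y)
        simpa [Real.norm_eq_abs] using this
      obtain ⟨ξ, hξ1, hξ2, hξ3⟩ := Q j hj2 (by omega) x
      have h2 : |x - ξ| ≤ 2^j := by rw [abs_of_nonpos (by linarith)]; linarith
      have hPi1 : (1:ℝ) ≤ P^(i+1) := one_le_pow₀ hP1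
      have h2jk : (2:ℝ)^j ≤ 2^k := pow_le_pow_right₀ (by norm_num) (by omega)
      have hbound : |iteratedDeriv j σ x| ≤ 2^j * C₁ + P^(i+1) * 2^j := by
        calc |iteratedDeriv j σ x| ≤ |iteratedDeriv j σ x - iteratedDeriv j σ ξ|
              + |iteratedDeriv j σ ξ| := by
              have := abs_sub_abs_le_abs_sub (iteratedDeriv j σ x) (iteratedDeriv j σ ξ)
              linarith [abs_nonneg (iteratedDeriv j σ ξ)]
          _ ≤ P^(i+1) * |x - ξ| + 2^j * C₁ := add_le_add (hlipj x ξ) hξ3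
          _ ≤ P^(i+1) * 2^j + 2^j * C₁ := by nlinarith
          _ = 2^j * C₁ + P^(i+1) * 2^j := by ring
      have hfin : 2^j * C₁ + P^(i+1) * 2^j ≤ P^(i+1+1) := by
        have hPP : P^(i+1+1) = P * P^(i+1) := by ring
        have hPge : P ≥ 2^k * C₁ + 2^k := by nlinarith
        have h2kj : (0:ℝ) < 2^j := by positivity
        calc 2^j * C₁ + P^(i+1) * 2^j ≤ 2^k * C₁ + P^(i+1) * 2^k := by nlinarith
          _ ≤ 2^k * C₁ * P^(i+1) + 2^k * P^(i+1) := by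
              have hcc : (0:ℝ) ≤ 2^k * C₁ := by positivity
              nlinarith [mul_le_mul_of_nonneg_left hPi1 hcc]
          _ = (2^k * C₁ + 2^k) * P^(i+1) := by ring
          _ ≤ P * P^(i+1) := by
              nlinarith [pow_pos (lt_of_lt_of_le zero_lt_one hP1) (i+1)]
          _ = P^(i+1+1) := hPP.symm
      exact le_trans hbound hfin
  intro j hj2 hjk x
  calc |iteratedDeriv j σ x| ≤ P^(k-j+1) := T (k - j) j (by omega) hj2 x
    _ ≤ P^k := pow_le_pow_right₀ hP1 (by omega)

/-- Explicit gradient of the Taylorized model. -/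
lemma netT_hasGradientAt (d m k : ℕ) (σ : ℝ → ℝ) (a : Fin m → ℝ) (W₀ W : Wts d m)
    (x : EuclideanSpace ℝ (Fin d)) :
    HasGradientAt (fun V => netT d m k σ a W₀ V x)
      ((WithLp.toLp 2 (fun r => ((Real.sqrt m)⁻¹ * (a r * ∑ j ∈ Finset.range (k + 1),
          (iteratedDeriv j σ ⟪W₀ r, x⟫ / (j.factorial : ℝ)) *
            ((j : ℝ) * ⟪W r - W₀ r, x⟫ ^ (j - 1)))) • x) : Wts d m)) W := by
  unfold netT
  set c : Fin m → ℕ → ℝ := fun r j => iteratedDeriv j σ ⟪W₀ r, x⟫ / (j.factorial : ℝ) with hc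
  set s : Fin m → ℝ := fun r => ⟪W r - W₀ r, x⟫ with hs
  set ℓ : Fin m → (Wts d m →L[ℝ] ℝ) := fun r => (innerSL ℝ x).comp (PiLp.proj 2 _ r) with hℓ
  have hℓap : ∀ (r : Fin m) (V : Wts d m), ℓ r V = ⟪x, V r⟫ := by
    intro r V; simp [hℓ]
  have hlin : ∀ r : Fin m, HasFDerivAt (fun V : Wts d m => ⟪V r - W₀ r, x⟫) (ℓ r) W := by
    intro r
    have h0 : (fun V : Wts d m => ⟪V r - W₀ r, x⟫) = fun V => ℓ r V - ⟪x, W₀ r⟫ := by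
      funext V
      rw [hℓap]
      rw [← inner_sub_right]
      exact real_inner_comm _ _
    rw [h0]
    exact ((ℓ r).hasFDerivAt).sub_const _
  have hterm : HasFDerivAt (fun V : Wts d m => (Real.sqrt m)⁻¹ *
      ∑ r : Fin m, a r * ∑ j ∈ Finset.range (k + 1), c r j * ⟪V r - W₀ r, x⟫ ^ j)
      ((Real.sqrt m)⁻¹ • ∑ r : Fin m, a r • ∑ j ∈ Finset.range (k + 1),
        c r j • (((j : ℝ) * s r ^ (j - 1)) • ℓ r)) W := by
    apply HasFDerivAt.const_mul
    apply HasFDerivAt.fun_sum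
    intro r _
    apply HasFDerivAt.const_mul
    apply HasFDerivAt.fun_sum
    intro j _
    exact ((hasDerivAt_pow j (s r)).comp_hasFDerivAt W (hlin r)).const_mul (c r j)
  have hgoal : (InnerProductSpace.toDual ℝ (Wts d m))
      ((WithLp.toLp 2 (fun r => ((Real.sqrt m)⁻¹ * (a r * ∑ j ∈ Finset.range (k + 1),
          c r j * ((j : ℝ) * s r ^ (j - 1)))) • x) : Wts d m))
      = ((Real.sqrt m)⁻¹ • ∑ r : Fin m, a r • ∑ j ∈ Finset.range (k + 1),
        c r j • (((j : ℝ) * s r ^ (j - 1)) • ℓ r)) := by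
    apply ContinuousLinearMap.ext
    intro V
    rw [InnerProductSpace.toDual_apply_apply]
    rw [PiLp.inner_apply]
    simp only [ContinuousLinearMap.coe_smul', Pi.smul_apply, ContinuousLinearMap.coe_sum',
      Finset.sum_apply, hℓap, real_inner_smul_left, smul_eq_mul, WithLp.ofLp_toLp]
    rw [Finset.mul_sum]
    refine Finset.sum_congr rfl fun r _ => ?_
    have hsw : ∑ j ∈ Finset.range (k+1), c r j * ((j:ℝ) * s r ^ (j-1) * inner ℝ x (V r))
        = (∑ j ∈ Finset.range (k+1), c r j * ((j:ℝ) * s r ^ (j-1))) * inner ℝ x (V r) := by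
      rw [Finset.sum_mul]; exact Finset.sum_congr rfl fun j _ => by ring
    rw [hsw]; ring
  rw [hasGradientAt_iff_hasFDerivAt, hgoal]
  exact hterm

/-- Coordinate norm bound in `PiLp 2`. -/
lemma aux_block_norm_le {d m : ℕ} (U : Wts d m) (r : Fin m) : ‖U r‖ ≤ ‖U‖ := by
  have h := PiLp.norm_sq_eq_of_L2 (fun _ : Fin m => EuclideanSpace ℝ (Fin d)) U
  have h1 : ‖U r‖^2 ≤ ‖U‖^2 := by
    rw [h]
    exact Finset.single_le_sum (fun i _ => sq_nonneg ‖U i‖) (Finset.mem_univ r)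
  calc ‖U r‖ = Real.sqrt (‖U r‖^2) := (Real.sqrt_sq (norm_nonneg _)).symm
    _ ≤ Real.sqrt (‖U‖^2) := Real.sqrt_le_sqrt h1
    _ = ‖U‖ := Real.sqrt_sq (norm_nonneg _)

/-- Lipschitzness of the Taylorized Jacobian on a Frobenius ball (part of
Lemma A.2(a)); the constant `K` depends only on `(k, L, C₁, C₀, n)` and not on `m`. -/
theorem taylorized_jacobian_lipschitz_on_ball
    (n k : ℕ) (hk : 1 ≤ k) (C₁ L C₀ : ℝ) (hC₀ : 0 < C₀) :
    ∃ K : ℝ, 0 < K ∧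
      ∀ (d m : ℕ) (σ : ℝ → ℝ), ContDiff ℝ k σ →
        (∀ s t : ℝ, |deriv σ s - deriv σ t| ≤ C₁ * |s - t|) →
        (∀ s t : ℝ, |iteratedDeriv k σ s - iteratedDeriv k σ t| ≤ L * |s - t|) →
      ∀ a : Fin m → ℝ, (∀ r, a r = 1 ∨ a r = -1) →
      ∀ (W₀ : Wts d m) (X : Fin n → EuclideanSpace ℝ (Fin d)),
        (∀ i, ‖X i‖ = 1) →
      ∀ W W' : Wts d m, ‖W - W₀‖ ≤ C₀ → ‖W' - W₀‖ ≤ C₀ →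
        Real.sqrt (∑ i, ‖JrowT d m n k σ a W₀ X W i - JrowT d m n k σ a W₀ X W' i‖ ^ 2)
          ≤ K * ‖W - W'‖ := by
  set C₁' : ℝ := max C₁ 0 with hC₁'def
  set L' : ℝ := max L 0 with hL'def
  set M : ℝ := (2^k * (C₁' + L' + 1) + 2)^k with hMdef
  set Cm : ℝ := max C₀ 1 with hCmdef
  have hCm1 : (1:ℝ) ≤ Cm := le_max_right _ _
  have hM0 : (0:ℝ) ≤ M := by positivity
  set K₂ : ℝ := M * ∑ j ∈ Finset.range (k+1), (j:ℝ) * (j:ℝ) * Cm^j with hK₂def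
  have hK₂0 : (0:ℝ) ≤ K₂ := by
    apply mul_nonneg hM0
    apply Finset.sum_nonneg
    intro j _
    have : (0:ℝ) ≤ Cm^j := by positivity
    positivity
  refine ⟨Real.sqrt n * K₂ + 1, by positivity, ?_⟩
  intro d m σ hσ hC₁ hL a ha W₀ X hX W W' hW hW'
  have hC₁l : ∀ s t : ℝ, |deriv σ s - deriv σ t| ≤ C₁' * |s - t| := fun s t =>
    (hC₁ s t).trans (mul_le_mul_of_nonneg_right (le_max_left _ _) (abs_nonneg _))
  have hLl : ∀ s t : ℝ, |iteratedDeriv k σ s - iteratedDeriv k σ t| ≤ L' * |s - t| := fun s t =>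
    (hL s t).trans (mul_le_mul_of_nonneg_right (le_max_left _ _) (abs_nonneg _))
  have hMb : ∀ j, 2 ≤ j → j ≤ k → ∀ u, |iteratedDeriv j σ u| ≤ M :=
    aux_iteratedDeriv_bound k C₁' L' (le_max_right _ _) (le_max_right _ _) σ hσ hC₁l hLl
  have hsm0 : (0:ℝ) ≤ (Real.sqrt m)⁻¹ := by positivity
  have hsm1 : (Real.sqrt m)⁻¹ ≤ 1 := by
    rcases Nat.eq_zero_or_pos m with hm | hm
    · subst hm; simp
    · have : (1:ℝ) ≤ Real.sqrt m := Real.one_le_sqrt.mpr (by exact_mod_cast hm)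
      exact inv_le_one_of_one_le₀ this
  -- the key pointwise bound
  have hrow : ∀ i : Fin n, ‖JrowT d m n k σ a W₀ X W i - JrowT d m n k σ a W₀ X W' i‖^2
      ≤ K₂^2 * ‖W - W'‖^2 := by
    intro i
    set x := X i with hxdef
    have hx : ‖x‖ = 1 := hX i
    have e1 := (netT_hasGradientAt d m k σ a W₀ W x).gradient
    have e2 := (netT_hasGradientAt d m k σ a W₀ W' x).gradient
    have hJ1 : JrowT d m n k σ a W₀ X W i = (WithLp.toLp 2 (fun r => ((Real.sqrt m)⁻¹ *
        (a r * ∑ j ∈ Finset.range (k + 1), (iteratedDeriv j σ ⟪W₀ r, x⟫ / (j.factorial : ℝ)) *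
          ((j : ℝ) * ⟪W r - W₀ r, x⟫ ^ (j - 1)))) • x) : Wts d m) := e1
    have hJ2 : JrowT d m n k σ a W₀ X W' i = (WithLp.toLp 2 (fun r => ((Real.sqrt m)⁻¹ *
        (a r * ∑ j ∈ Finset.range (k + 1), (iteratedDeriv j σ ⟪W₀ r, x⟫ / (j.factorial : ℝ)) *
          ((j : ℝ) * ⟪W' r - W₀ r, x⟫ ^ (j - 1)))) • x) : Wts d m) := e2
    set cf : Fin m → ℕ → ℝ := fun r j => iteratedDeriv j σ ⟪W₀ r, x⟫ / (j.factorial : ℝ) with hcf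
    -- blockwise bound
    have hblock : ∀ r : Fin m, ‖JrowT d m n k σ a W₀ X W i r - JrowT d m n k σ a W₀ X W' i r‖
        ≤ K₂ * ‖W r - W' r‖ := by
      intro r
      rw [hJ1, hJ2]
      simp only [WithLp.ofLp_toLp]
      set sW : ℝ := ⟪W r - W₀ r, x⟫ with hsW
      set sW' : ℝ := ⟪W' r - W₀ r, x⟫ with hsW'
      have hdiffeq : ((Real.sqrt m)⁻¹ * (a r * ∑ j ∈ Finset.range (k + 1),
            cf r j * ((j : ℝ) * sW ^ (j - 1)))) • x
          - ((Real.sqrt m)⁻¹ * (a r * ∑ j ∈ Finset.range (k + 1),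
            cf r j * ((j : ℝ) * sW' ^ (j - 1)))) • x
          = (((Real.sqrt m)⁻¹ * a r) * ((∑ j ∈ Finset.range (k + 1),
              cf r j * ((j : ℝ) * sW ^ (j - 1)))
            - (∑ j ∈ Finset.range (k + 1), cf r j * ((j : ℝ) * sW' ^ (j - 1))))) • x := by
        rw [← sub_smul]; congr 1; ring
      rw [hdiffeq]
      rw [norm_smul, Real.norm_eq_abs, hx, mul_one, abs_mul, abs_mul]
      have har : |a r| = 1 := by rcases ha r with h | h <;> simp [h]
      rw [har, mul_one]
      -- bound |sW|, |sW'| ≤ Cm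
      have hsWb : |sW| ≤ Cm := by
        calc |sW| ≤ ‖W r - W₀ r‖ * ‖x‖ := abs_real_inner_le_norm _ _
          _ = ‖(W - W₀) r‖ := by rw [hx, mul_one, PiLp.sub_apply]
          _ ≤ ‖W - W₀‖ := aux_block_norm_le _ r
          _ ≤ Cm := le_trans hW (le_max_left _ _)
      have hsW'b : |sW'| ≤ Cm := by
        calc |sW'| ≤ ‖W' r - W₀ r‖ * ‖x‖ := abs_real_inner_le_norm _ _
          _ = ‖(W' - W₀) r‖ := by rw [hx, mul_one, PiLp.sub_apply]
          _ ≤ ‖W' - W₀‖ := aux_block_norm_le _ r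
          _ ≤ Cm := le_trans hW' (le_max_left _ _)
      have hds : |sW - sW'| ≤ ‖W r - W' r‖ := by
        have hee : sW - sW' = ⟪W r - W' r, x⟫ := by
          rw [hsW, hsW', ← inner_sub_left]
          congr 1
          abel
        rw [hee]
        calc |⟪W r - W' r, x⟫| ≤ ‖W r - W' r‖ * ‖x‖ := abs_real_inner_le_norm _ _
          _ = ‖W r - W' r‖ := by rw [hx, mul_one]
      -- now the scalar sum bound
      have hsum : |(∑ j ∈ Finset.range (k + 1), cf r j * ((j : ℝ) * sW ^ (j - 1)))
          - (∑ j ∈ Finset.range (k + 1), cf r j * ((j : ℝ) * sW' ^ (j - 1)))|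
          ≤ K₂ * |sW - sW'| := by
        rw [← Finset.sum_sub_distrib]
        calc |∑ j ∈ Finset.range (k + 1), (cf r j * ((j : ℝ) * sW ^ (j - 1))
              - cf r j * ((j : ℝ) * sW' ^ (j - 1)))|
            ≤ ∑ j ∈ Finset.range (k + 1), |cf r j * ((j : ℝ) * sW ^ (j - 1))
              - cf r j * ((j : ℝ) * sW' ^ (j - 1))| := Finset.abs_sum_le_sum_abs _ _
          _ ≤ ∑ j ∈ Finset.range (k + 1), M * ((j:ℝ) * (j:ℝ) * Cm^j) * |sW - sW'| := by
              apply Finset.sum_le_sum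
              intro j hj
              rcases Nat.lt_or_ge j 2 with hj2 | hj2
              · interval_cases j
                · simp
                · simp
                  positivity
              · have hjk : j ≤ k := by
                  have := Finset.mem_range.mp hj; omega
                have hcfb : |cf r j| ≤ M := by
                  rw [hcf]
                  have h1 : |iteratedDeriv j σ ⟪W₀ r, x⟫| ≤ M := hMb j hj2 hjk _
                  have h2 : (1:ℝ) ≤ (j.factorial : ℝ) := by
                    exact_mod_cast Nat.one_le_iff_ne_zero.mpr (Nat.factorial_ne_zero j)
                  rw [abs_div, abs_of_pos (by positivity : (0:ℝ) < (j.factorial:ℝ))]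
                  calc |iteratedDeriv j σ ⟪W₀ r, x⟫| / (j.factorial : ℝ)
                      ≤ |iteratedDeriv j σ ⟪W₀ r, x⟫| / 1 := by
                        apply div_le_div_of_nonneg_left (abs_nonneg _) one_pos h2
                    _ = |iteratedDeriv j σ ⟪W₀ r, x⟫| := div_one _
                    _ ≤ M := h1
                have hpow : |sW ^ (j-1) - sW' ^ (j-1)| ≤ (j-1:ℕ) * Cm^(j-1) * |sW - sW'| :=
                  aux_pow_sub_pow hsWb hsW'b hCm1 (j-1)
                have heq : cf r j * ((j : ℝ) * sW ^ (j - 1)) - cf r j * ((j : ℝ) * sW' ^ (j - 1))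
                    = cf r j * (j : ℝ) * (sW ^ (j-1) - sW' ^ (j-1)) := by ring
                rw [heq, abs_mul, abs_mul, Nat.abs_cast]
                have hmono1 : ((j-1:ℕ):ℝ) ≤ (j:ℝ) := by
                  exact_mod_cast Nat.cast_le.mpr (Nat.sub_le j 1)
                have hmono2 : Cm^(j-1) ≤ Cm^j := pow_le_pow_right₀ hCm1 (Nat.sub_le j 1)
                calc |cf r j| * (j:ℝ) * |sW ^ (j-1) - sW' ^ (j-1)|
                    ≤ M * (j:ℝ) * ((j-1:ℕ) * Cm^(j-1) * |sW - sW'|) := by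
                      apply mul_le_mul (mul_le_mul_of_nonneg_right hcfb (Nat.cast_nonneg j))
                        hpow (abs_nonneg _)
                      positivity
                  _ ≤ M * (j:ℝ) * ((j:ℝ) * Cm^j * |sW - sW'|) := by
                      apply mul_le_mul_of_nonneg_left _ (by positivity)
                      apply mul_le_mul _ (le_refl _) (abs_nonneg _) (by positivity)
                      exact mul_le_mul hmono1 hmono2 (by positivity) (Nat.cast_nonneg j)
                  _ = M * ((j:ℝ) * (j:ℝ) * Cm^j) * |sW - sW'| := by ring
          _ = (∑ j ∈ Finset.range (k + 1), M * ((j:ℝ) * (j:ℝ) * Cm^j)) * |sW - sW'| := by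
              rw [Finset.sum_mul]
          _ = K₂ * |sW - sW'| := by rw [hK₂def, Finset.mul_sum]
      calc |(Real.sqrt m)⁻¹| * |(∑ j ∈ Finset.range (k + 1), cf r j * ((j : ℝ) * sW ^ (j - 1)))
            - (∑ j ∈ Finset.range (k + 1), cf r j * ((j : ℝ) * sW' ^ (j - 1)))|
          ≤ 1 * (K₂ * |sW - sW'|) := by
            apply mul_le_mul _ hsum (abs_nonneg _) zero_le_one
            rw [abs_of_nonneg hsm0]; exact hsm1
        _ = K₂ * |sW - sW'| := one_mul _
        _ ≤ K₂ * ‖W r - W' r‖ := mul_le_mul_of_nonneg_left hds hK₂0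
    -- assemble the row
    have hnormsq := PiLp.norm_sq_eq_of_L2 (fun _ : Fin m => EuclideanSpace ℝ (Fin d))
      (JrowT d m n k σ a W₀ X W i - JrowT d m n k σ a W₀ X W' i)
    rw [hnormsq]
    have hWnormsq := PiLp.norm_sq_eq_of_L2 (fun _ : Fin m => EuclideanSpace ℝ (Fin d)) (W - W')
    calc ∑ r, ‖(JrowT d m n k σ a W₀ X W i - JrowT d m n k σ a W₀ X W' i) r‖^2
        ≤ ∑ r, K₂^2 * ‖W r - W' r‖^2 := by
          apply Finset.sum_le_sum
          intro r _
          rw [PiLp.sub_apply]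
          have := hblock r
          calc ‖JrowT d m n k σ a W₀ X W i r - JrowT d m n k σ a W₀ X W' i r‖^2
              ≤ (K₂ * ‖W r - W' r‖)^2 := by
                apply pow_le_pow_left₀ (norm_nonneg _) this
            _ = K₂^2 * ‖W r - W' r‖^2 := by ring
      _ = K₂^2 * ∑ r, ‖W r - W' r‖^2 := by rw [Finset.mul_sum]
      _ = K₂^2 * ‖W - W'‖^2 := by
          rw [hWnormsq]
          simp only [PiLp.sub_apply]
  -- final assembly
  have hfin : ∑ i, ‖JrowT d m n k σ a W₀ X W i - JrowT d m n k σ a W₀ X W' i‖^2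
      ≤ (Real.sqrt n * K₂ * ‖W - W'‖)^2 := by
    calc ∑ i, ‖JrowT d m n k σ a W₀ X W i - JrowT d m n k σ a W₀ X W' i‖^2
        ≤ ∑ _i : Fin n, K₂^2 * ‖W - W'‖^2 := Finset.sum_le_sum fun i _ => hrow i
      _ = (n:ℝ) * (K₂^2 * ‖W - W'‖^2) := by
          rw [Finset.sum_const, Finset.card_univ, Fintype.card_fin, nsmul_eq_mul]
      _ = (Real.sqrt n)^2 * (K₂^2 * ‖W - W'‖^2) := by
          rw [Real.sq_sqrt (Nat.cast_nonneg n)]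
      _ = (Real.sqrt n * K₂ * ‖W - W'‖)^2 := by ring
  calc Real.sqrt (∑ i, ‖JrowT d m n k σ a W₀ X W i - JrowT d m n k σ a W₀ X W' i‖^2)
      ≤ Real.sqrt ((Real.sqrt n * K₂ * ‖W - W'‖)^2) := Real.sqrt_le_sqrt hfin
    _ = Real.sqrt n * K₂ * ‖W - W'‖ := Real.sqrt_sq (by positivity)
    _ ≤ (Real.sqrt n * K₂ + 1) * ‖W - W'‖ := by
        apply mul_le_mul_of_nonneg_right _ (norm_nonneg _)
        linarith
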